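/- Let G be a finite connected graph. Then the strong resolving graph G_SR is a complete graph (on the vertex set ∂(G)) if and only if ∂(G) = σ(G), i.e., every boundary vertex of G is simplicial. -/

import Mathlib

open SimpleGraph

variable {V : Type*}

/-- `u` is maximally distant from `v` in `G`: every neighbor `w` of `u`
satisfies `d(v,w) ≤ d(v,u)`. -/
def MaxDistant (G : SimpleGraph V) (u v : V) : Prop :=
  ∀ w, G.Adj u w → G.dist v w ≤ G.dist v u

/-- `u` and `v` are mutually maximally distant in `G`. -/
def MMD (G : SimpleGraph V) (u v : V) : Prop :=
  MaxDistant G u v ∧ MaxDistant G v u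

/-- The boundary of `G`: vertices maximally distant from some vertex. -/
def boundary (G : SimpleGraph V) : Set V := {u | ∃ v, MaxDistant G u v}

/-- The strong resolving graph on the whole vertex set (`G_{SR+I}`):
two vertices are adjacent iff they are distinct and mutually maximally distant. -/
def srGraphI (G : SimpleGraph V) : SimpleGraph V where
  Adj u v := u ≠ v ∧ MMD G u v
  symm := by
    constructor
    rintro u v ⟨hne, h1, h2⟩
    exact ⟨hne.symm, h2, h1⟩
  loopless := by
    constructor
    rintro u ⟨hne, _⟩
    exact hne rfl

/-- The strong resolving graph `G_SR`, with vertex set the boundary of `G`. -/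
def srGraph (G : SimpleGraph V) : SimpleGraph (boundary G) :=
  (srGraphI G).induce (boundary G)

/-- `u` and `v` are true twins: distinct vertices with equal closed neighborhoods. -/
def TrueTwins (G : SimpleGraph V) (u v : V) : Prop :=
  u ≠ v ∧ insert u (G.neighborSet u) = insert v (G.neighborSet v)

/-- `u` and `v` are false twins: distinct vertices with equal open neighborhoods. -/
def FalseTwins (G : SimpleGraph V) (u v : V) : Prop :=
  u ≠ v ∧ G.neighborSet u = G.neighborSet v

/-- A vertex is simplicial if its neighborhood induces a complete graph. -/
def IsSimplicial (G : SimpleGraph V) (v : V) : Prop :=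
  ∀ a b, G.Adj v a → G.Adj v b → a ≠ b → G.Adj a b

/-- `w` strongly resolves `u` and `v`. -/
def StronglyResolves (G : SimpleGraph V) (w u v : V) : Prop :=
  G.dist w u = G.dist w v + G.dist v u ∨ G.dist w v = G.dist w u + G.dist u v

/-- `S` is a strong metric generator for `G`. -/
def IsStrongMetricGenerator (G : SimpleGraph V) (S : Set V) : Prop :=
  ∀ u v : V, u ≠ v → ∃ w ∈ S, StronglyResolves G w u v

/-- The strong metric dimension of `G`. -/
noncomputable def sdim (G : SimpleGraph V) : ℕ :=
  sInf {n | ∃ S : Set V, S.ncard = n ∧ IsStrongMetricGenerator G S}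

/-- `S` is a vertex cover of `H`. -/
def IsVertexCover (H : SimpleGraph V) (S : Set V) : Prop :=
  ∀ u v : V, H.Adj u v → u ∈ S ∨ v ∈ S

/-- The vertex cover number of `H`. -/
noncomputable def vertexCoverNumber (H : SimpleGraph V) : ℕ :=
  sInf {n | ∃ S : Set V, S.ncard = n ∧ _root_.IsVertexCover H S}

/-- The graph `G*`: distinct vertices adjacent iff at distance at least two
or true twins. -/
def GStar (G : SimpleGraph V) : SimpleGraph V where
  Adj u v := u ≠ v ∧ (2 ≤ G.dist u v ∨ TrueTwins G u v)
  symm := by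
    constructor
    rintro u v ⟨hne, h | h⟩
    · exact ⟨hne.symm, Or.inl (by rwa [G.dist_comm])⟩
    · exact ⟨hne.symm, Or.inr ⟨h.1.symm, h.2.symm⟩⟩
  loopless := by
    constructor
    rintro u ⟨hne, _⟩
    exact hne rfl

/-- The direct (tensor) product of two graphs. -/
def DirectProd {α β : Type*} (G : SimpleGraph α) (H : SimpleGraph β) :
    SimpleGraph (α × β) where
  Adj x y := G.Adj x.1 y.1 ∧ H.Adj x.2 y.2
  symm := ⟨fun _ _ h => ⟨h.1.symm, h.2.symm⟩⟩
  loopless := ⟨fun x h => G.loopless.1 x.1 h.1⟩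

/-- The strong product of two graphs. -/
def StrongProd {α β : Type*} (G : SimpleGraph α) (H : SimpleGraph β) :
    SimpleGraph (α × β) where
  Adj x y := x ≠ y ∧ (x.1 = y.1 ∨ G.Adj x.1 y.1) ∧ (x.2 = y.2 ∨ H.Adj x.2 y.2)
  symm := by
    constructor
    rintro x y ⟨hne, h1, h2⟩
    exact ⟨hne.symm, h1.imp Eq.symm Adj.symm, h2.imp Eq.symm Adj.symm⟩
  loopless := by
    constructor
    rintro x ⟨hne, _⟩
    exact hne rfl

/-- The Cartesian sum (disjunctive product) of two graphs. -/
def CartSum {α β : Type*} (G : SimpleGraph α) (H : SimpleGraph β) :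
    SimpleGraph (α × β) where
  Adj x y := G.Adj x.1 y.1 ∨ H.Adj x.2 y.2
  symm := ⟨fun _ _ h => h.imp Adj.symm Adj.symm⟩
  loopless := ⟨fun x h => h.elim (G.loopless.1 x.1) (H.loopless.1 x.2)⟩

/-- The lexicographic product of two graphs. -/
def LexProd {α β : Type*} (G : SimpleGraph α) (H : SimpleGraph β) :
    SimpleGraph (α × β) where
  Adj x y := G.Adj x.1 y.1 ∨ (x.1 = y.1 ∧ H.Adj x.2 y.2)
  symm := ⟨fun _ _ h => h.imp Adj.symm (fun h => ⟨h.1.symm, h.2.symm⟩)⟩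
  loopless := ⟨fun x h => h.elim (G.loopless.1 x.1) (fun h => H.loopless.1 x.2 h.2)⟩

/-- The disjoint union of `n` copies of the complete graph on `m` vertices. -/
def CopiesComplete (n m : ℕ) : SimpleGraph (Fin n × Fin m) where
  Adj x y := x.1 = y.1 ∧ x.2 ≠ y.2
  symm := ⟨fun _ _ h => ⟨h.1.symm, h.2.symm⟩⟩
  loopless := ⟨fun x h => h.2 rfl⟩

/-- Every pair of vertices lies on a common cycle of length five. -/
def C5Connected (G : SimpleGraph V) : Prop :=
  ∀ u v : V, ∃ (w : V) (c : G.Walk w w), c.IsCycle ∧ c.length = 5 ∧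
    u ∈ c.support ∧ v ∈ c.support

lemma simplicial_maxDistant {G : SimpleGraph V} (hG : G.Connected) {u : V}
    (hu : IsSimplicial G u) {v : V} (hne : v ≠ u) : MaxDistant G u v := by
  intro w hw
  obtain ⟨p, hp⟩ := hG.exists_walk_length_eq_dist u v
  cases p with
  | nil => exact absurd rfl hne.symm
  | @cons _ x _ h q =>
    have hxv : G.dist v x ≤ q.length := by
      rw [SimpleGraph.dist_comm]; exact SimpleGraph.dist_le q
    have hlen : q.length + 1 = G.dist u v := by simpa using hp
    have hvu : G.dist v u = G.dist u v := SimpleGraph.dist_comm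
    rcases eq_or_ne w x with rfl | hwx
    · omega
    · have hadj : G.Adj x w := hu x w h hw (Ne.symm hwx)
      have h1 : G.dist v w ≤ G.dist v x + G.dist x w := hG.dist_triangle
      have h2 : G.dist x w = 1 := SimpleGraph.dist_eq_one_iff_adj.mpr hadj
      omega

lemma simplicial_mem_boundary {G : SimpleGraph V} (hG : G.Connected) {u : V}
    (hu : IsSimplicial G u) : u ∈ boundary G := by
  by_cases h : ∃ v, v ≠ u
  · obtain ⟨v, hv⟩ := h
    exact ⟨v, simplicial_maxDistant hG hu hv⟩
  · push_neg at h
    refine ⟨u, fun w hw => ?_⟩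
    exact absurd ((h w) ▸ hw) (G.loopless.1 u)

theorem stmt3 [Fintype V] (G : SimpleGraph V) (hG : G.Connected) :
    srGraph G = ⊤ ↔ boundary G = {v | IsSimplicial G v} := by
  classical
  constructor
  · intro h
    ext u
    simp only [Set.mem_setOf_eq]
    constructor
    · intro hu a b ha hb hab
      by_contra hnadj
      have hau : G.dist a u = 1 := SimpleGraph.dist_eq_one_iff_adj.mpr ha.symm
      have hub : G.dist u b = 1 := SimpleGraph.dist_eq_one_iff_adj.mpr hb
      have hab1 : G.dist a b ≠ 1 := fun hd => hnadj (SimpleGraph.dist_eq_one_iff_adj.mp hd)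
      have hab0 : 0 < G.dist a b := hG.pos_dist_of_ne hab
      have habt : G.dist a b ≤ G.dist a u + G.dist u b := hG.dist_triangle
      have hab2 : G.dist a b = 2 := by omega
      -- pick c maximizing dist a · over S = {z | dist a z = dist b z + 2}
      set s : Finset V := Finset.univ.filter (fun z => G.dist a z = G.dist b z + 2) with hs
      have hbs : b ∈ s := by
        simp [hs, hab2, G.dist_self]
      obtain ⟨c, hcs, hmax⟩ := s.exists_max_image (G.dist a) ⟨b, hbs⟩
      have hcS : G.dist a c = G.dist b c + 2 := by
        simpa [hs] using hcs
      have hcb : MaxDistant G c a := by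
        intro x hx
        by_contra hlt
        push_neg at hlt
        have h1 : G.dist a x ≤ G.dist a c + G.dist c x := hG.dist_triangle
        have h2 : G.dist b x ≤ G.dist b c + G.dist c x := hG.dist_triangle
        have h3 : G.dist a x ≤ G.dist a b + G.dist b x := hG.dist_triangle
        have hcx : G.dist c x = 1 := SimpleGraph.dist_eq_one_iff_adj.mpr hx
        have hxs : x ∈ s := by
          simp only [hs, Finset.mem_filter, Finset.mem_univ, true_and]
          omega
        have := hmax x hxs
        omega
      have hcbd : c ∈ boundary G := ⟨a, hcb⟩
      have hnuc : u ≠ c := by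
        intro hEq
        rw [← hEq] at hcS
        omega
      have hadj : (srGraph G).Adj ⟨u, hu⟩ ⟨c, hcbd⟩ := by
        rw [h]
        simpa using hnuc
      have hmd : MaxDistant G u c := hadj.2.1
      have h4 : G.dist c a ≤ G.dist c u := hmd a ha
      have h5 : G.dist c u ≤ G.dist c b + G.dist b u := hG.dist_triangle
      have h6 : G.dist b u = G.dist u b := SimpleGraph.dist_comm
      have h7 : G.dist c a = G.dist a c := SimpleGraph.dist_comm
      have h8 : G.dist c b = G.dist b c := SimpleGraph.dist_comm
      omega
    · intro hsim
      exact simplicial_mem_boundary hG hsim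
  · intro h
    ext ⟨x, hx⟩ ⟨y, hy⟩
    simp only [SimpleGraph.top_adj, ne_eq, Subtype.mk.injEq]
    constructor
    · rintro ⟨hne, _⟩
      exact hne
    · intro hne
      rw [h] at hx hy
      have hxs : IsSimplicial G x := hx
      have hys : IsSimplicial G y := hy
      exact ⟨hne, simplicial_maxDistant hG hxs (Ne.symm hne),
        simplicial_maxDistant hG hys hne⟩
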